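/- Every integer occurs as a coefficient of some cyclotomic polynomial: for each c ∈ ℤ there exist n and m such that the coefficient of x^m in Φ_n equals c. -/

import Mathlib

open Polynomial Finset ArithmeticFunction
open scoped ArithmeticFunction.Moebius

namespace Suzuki


lemma coeff_eq_of_dvd {A B : ℤ[X]} {m k : ℕ} (h : (X:ℤ[X])^(m+1) ∣ A - B) (hk : k ≤ m) :
    A.coeff k = B.coeff k := by
  obtain ⟨t, ht⟩ := h
  have hA : A = B + t * X^(m+1) := by linear_combination ht + (mul_comm ((X:ℤ[X])^(m+1)) t)
  rw [hA, coeff_add, coeff_mul_X_pow', if_neg (by omega), add_zero]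

lemma sum_X_pow_coeff (P : Finset ℕ) (k : ℕ) :
    (∑ p ∈ P, (X:ℤ[X])^p).coeff k = if k ∈ P then 1 else 0 := by
  rw [finset_sum_coeff]
  simp only [coeff_X_pow]
  rw [Finset.sum_ite_eq P k (fun _ => (1:ℤ))]

lemma prod_one_sub_X_pow {m : ℕ} (P : Finset ℕ) (h : ∀ p ∈ P, ∀ q ∈ P, m < p + q) :
    (X:ℤ[X])^(m+1) ∣ (∏ p ∈ P, (1 - X^p)) - (1 - ∑ p ∈ P, X^p) := by
  classical
  induction P using Finset.induction with
  | empty => simp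
  | insert _ _ ha ih =>
    rename_i a P'
    have h' : ∀ p ∈ P', ∀ q ∈ P', m < p + q := fun p hp q hq =>
      h p (mem_insert_of_mem hp) q (mem_insert_of_mem hq)
    obtain ⟨t, ht⟩ := ih h'
    rw [Finset.prod_insert ha, Finset.sum_insert ha]
    have expand : (1 - (X:ℤ[X])^a) * ∏ p ∈ P', (1 - X^p)
        - (1 - (X^a + ∑ p ∈ P', X^p))
        = (1 - X^a) * (X^(m+1) * t) + ∑ p ∈ P', (X^(a+p) : ℤ[X]) := by
      have : (∏ p ∈ P', ((1:ℤ[X]) - X^p)) = (1 - ∑ p ∈ P', X^p) + X^(m+1)*t := by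
        linear_combination ht
      rw [this, Finset.sum_congr rfl (fun p (_: p ∈ P') => (pow_add (X:ℤ[X]) a p)), ← Finset.mul_sum]
      ring
    rw [expand]
    apply dvd_add
    · exact Dvd.dvd.mul_left (Dvd.intro t rfl) _
    · apply Finset.dvd_sum
      intro p hp
      apply pow_dvd_pow
      have := h a (mem_insert_self a _) p (mem_insert_of_mem hp)
      omega

lemma sq_sum_X_pow {m : ℕ} (P : Finset ℕ) (h : ∀ p ∈ P, ∀ q ∈ P, m < p + q) :
    (X:ℤ[X])^(m+1) ∣ (∑ p ∈ P, (X:ℤ[X])^p) * (∑ q ∈ P, (X:ℤ[X])^q) := by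
  rw [Finset.sum_mul_sum]
  apply Finset.dvd_sum; intro p hp
  apply Finset.dvd_sum; intro q hq
  rw [← pow_add]
  exact pow_dvd_pow _ (by have := h p hp q hq; omega)


lemma moebius_poly (N : ℕ) (hN : Squarefree N) :
    cyclotomic N ℤ *
      ∏ i ∈ N.divisorsAntidiagonal.filter (fun i => μ i.1 = -1), (X^i.2 - 1) =
    ∏ i ∈ N.divisorsAntidiagonal.filter (fun i => μ i.1 = 1), (X^i.2 - 1) := by
  classical
  have h0 : N ≠ 0 := hN.ne_zero
  apply IsFractionRing.injective ℤ[X] (RatFunc ℤ)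
  set A := algebraMap ℤ[X] (RatFunc ℤ) with hA
  have key := cyclotomic_eq_prod_X_pow_sub_one_pow_moebius (n := N) ℤ
  rw [map_mul, map_prod, map_prod, key]
  -- nonvanishing
  have hne : ∀ i ∈ N.divisorsAntidiagonal, A (X^i.2 - 1) ≠ 0 := by
    intro i hi
    rw [Nat.mem_divisorsAntidiagonal] at hi
    have h2 : 0 < i.2 := by
      rcases Nat.eq_zero_or_pos i.2 with h | h
      · exfalso; apply h0; rw [← hi.1, h, mul_zero]
      · exact h
    have : (X^i.2 - 1 : ℤ[X]) ≠ 0 := by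
      simpa using X_pow_sub_C_ne_zero h2 (1:ℤ)
    exact (map_ne_zero_iff A (IsFractionRing.injective ℤ[X] (RatFunc ℤ))).mpr this
  have hsplit := Finset.prod_filter_mul_prod_filter_not N.divisorsAntidiagonal
      (fun i => μ i.1 = 1) (fun i => A (X^i.2 - 1) ^ (μ i.1))
  rw [← hsplit]
  have h1 : ∀ i ∈ N.divisorsAntidiagonal.filter (fun i => μ i.1 = 1),
      A (X^i.2 - 1) ^ (μ i.1) = A (X^i.2 - 1) := by
    intro i hi
    rw [Finset.mem_filter] at hi
    rw [hi.2, zpow_one]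
  have h2 : ∀ i ∈ N.divisorsAntidiagonal.filter (fun i => ¬ μ i.1 = 1),
      A (X^i.2 - 1) ^ (μ i.1) = (A (X^i.2 - 1))⁻¹ := by
    intro i hi
    rw [Finset.mem_filter] at hi
    have hdvd : i.1 ∣ N := Dvd.intro _ ((Nat.mem_divisorsAntidiagonal.mp hi.1).1)
    have hsq : Squarefree i.1 := hN.squarefree_of_dvd hdvd
    have := moebius_ne_zero_iff_eq_or.mp (moebius_ne_zero_iff_squarefree.mpr hsq)
    have hm : μ i.1 = -1 := by tauto
    rw [hm, zpow_neg_one]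
  rw [Finset.prod_congr rfl h1, Finset.prod_congr rfl h2]
  have hfc : N.divisorsAntidiagonal.filter (fun i => ¬ μ i.1 = 1)
      = N.divisorsAntidiagonal.filter (fun i => μ i.1 = -1) := by
    apply Finset.filter_congr
    intro i hi
    have hdvd : i.1 ∣ N := Dvd.intro _ ((Nat.mem_divisorsAntidiagonal.mp hi).1)
    have hsq : Squarefree i.1 := hN.squarefree_of_dvd hdvd
    have := moebius_ne_zero_iff_eq_or.mp (moebius_ne_zero_iff_squarefree.mpr hsq)
    constructor
    · intro h; tauto
    · intro h; rw [h]; norm_num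
  rw [hfc, mul_assoc, ← Finset.prod_mul_distrib]
  have hone : ∏ x ∈ N.divisorsAntidiagonal.filter (fun i => μ i.1 = -1),
      (A (X^x.2 - 1))⁻¹ * A (X^x.2 - 1) = 1 :=
    Finset.prod_eq_one (fun i hi => inv_mul_cancel₀ (hne i (Finset.mem_filter.mp hi).1))
  rw [hone, mul_one]


variable {y m : ℕ} {P : Finset ℕ}

def Pgood (y : ℕ) (P : Finset ℕ) : Prop := ∀ p ∈ P, p.Prime ∧ y ≤ p ∧ p < 2*y

lemma coprime_prod {a : ℕ} (ha : a.Prime) (haP : a ∉ P) (h : ∀ p ∈ P, p.Prime) :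
    a.Coprime (∏ p ∈ P, p) :=
  Nat.Coprime.prod_right fun p hp =>
    (Nat.coprime_primes ha (h p hp)).mpr (fun he => haP (he ▸ hp))

lemma sqf_prod (h : ∀ p ∈ P, p.Prime) : Squarefree (∏ p ∈ P, p) := by
  classical
  induction P using Finset.induction with
  | empty => simpa using squarefree_one
  | insert _ _ ha ih =>
    rename_i a P'
    rw [Finset.prod_insert ha]
    have hp : ∀ p ∈ P', p.Prime := fun p hp => h p (mem_insert_of_mem hp)
    have haprime := h a (mem_insert_self a _)
    exact Nat.squarefree_mul_iff.mpr
      ⟨coprime_prod haprime ha hp, haprime.squarefree, ih hp⟩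

lemma moebius_prod (h : ∀ p ∈ P, p.Prime) :
    μ (∏ p ∈ P, p) = (-1) ^ P.card := by
  classical
  induction P using Finset.induction with
  | empty => simp
  | insert _ _ ha ih =>
    rename_i a P'
    have hp : ∀ p ∈ P', p.Prime := fun p hp => h p (mem_insert_of_mem hp)
    have haprime := h a (mem_insert_self a _)
    rw [Finset.prod_insert ha, isMultiplicative_moebius.map_mul_of_coprime
      (coprime_prod haprime ha hp), moebius_apply_prime haprime, ih hp,
      Finset.card_insert_of_notMem ha, pow_succ]
    ring

lemma prod_ne_zero (h : ∀ p ∈ P, p.Prime) : (∏ p ∈ P, p) ≠ 0 :=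
  Finset.prod_ne_zero_iff.mpr (fun p hp => (h p hp).ne_zero)

lemma small_dvd_two (hy : 3 ≤ y) (hP : Pgood y P) (hm : m < 2*y)
    {b : ℕ} (hb : b ∣ 2 * ∏ p ∈ P, p) (hbm : b ≤ m) :
    b = 1 ∨ b = 2 ∨ b ∈ P := by
  classical
  have hp : ∀ p ∈ P, p.Prime := fun p h => (hP p h).1
  have h2P : (2:ℕ) ∉ P := fun h2 => by have := (hP 2 h2).2.1; omega
  have hsq2 : Squarefree (2 * ∏ p ∈ P, p) := by
    have : Squarefree (∏ p ∈ insert 2 P, p) := sqf_prod (by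
      intro p hp'
      rcases Finset.mem_insert.mp hp' with h | h
      · rw [h]; exact Nat.prime_two
      · exact hp p h)
    rwa [Finset.prod_insert h2P] at this
  have hb0 : b ≠ 0 := by
    rintro rfl
    exact Nat.mul_ne_zero two_ne_zero (prod_ne_zero hp) (Nat.zero_dvd.mp hb)
  have hbsq : Squarefree b := hsq2.squarefree_of_dvd hb
  have hsub : b.primeFactors ⊆ insert 2 P := by
    intro q hq
    rw [Nat.mem_primeFactors] at hq
    have : q ∈ (2 * ∏ p ∈ P, p).primeFactors := by
      rw [Nat.mem_primeFactors]
      exact ⟨hq.1, hq.2.1.trans hb, Nat.mul_ne_zero two_ne_zero (prod_ne_zero hp)⟩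
    have heq : (2 * ∏ p ∈ P, p).primeFactors = insert 2 P := by
      have : (∏ p ∈ insert 2 P, p).primeFactors = insert 2 P := Nat.primeFactors_prod (by
        intro p hp'
        rcases Finset.mem_insert.mp hp' with h | h
        · rw [h]; exact Nat.prime_two
        · exact hp p h)
      rwa [Finset.prod_insert h2P] at this
    rwa [heq] at this
  rcases Nat.lt_or_ge b.primeFactors.card 2 with hc | hc
  · rcases Nat.lt_or_ge b.primeFactors.card 1 with hc0 | hc1
    · -- empty
      have : b.primeFactors = ∅ := Finset.card_eq_zero.mp (by omega)
      rcases Nat.primeFactors_eq_empty.mp this with h | h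
      · exact absurd h hb0
      · exact Or.inl h
    · -- singleton
      obtain ⟨q, hq⟩ := Finset.card_eq_one.mp (le_antisymm (by omega) hc1)
      have hbq : b = q := by
        have h' := Nat.prod_primeFactors_of_squarefree hbsq
        rw [hq, Finset.prod_singleton] at h'
        exact h'.symm
      have hqmem : q ∈ insert 2 P := hsub (hq ▸ Finset.mem_singleton_self q)
      rcases Finset.mem_insert.mp hqmem with h | h
      · exact Or.inr (Or.inl (hbq.trans h))
      · exact Or.inr (Or.inr (hbq ▸ h))
  · obtain ⟨q1, hq1, q2, hq2, hne⟩ := Finset.one_lt_card.mp hc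
    exfalso
    have hq1p : q1.Prime := (Nat.mem_primeFactors.mp hq1).1
    have hq2p : q2.Prime := (Nat.mem_primeFactors.mp hq2).1
    have hdvd : q1 * q2 ∣ b :=
      ((Nat.coprime_primes hq1p hq2p).mpr hne).mul_dvd_of_dvd_of_dvd
        (Nat.mem_primeFactors.mp hq1).2.1 (Nat.mem_primeFactors.mp hq2).2.1
    have hle : q1 * q2 ≤ m := le_trans (Nat.le_of_dvd (Nat.pos_of_ne_zero hb0) hdvd) hbm
    have hbig : 2 * y ≤ q1 * q2 := by
      rcases Finset.mem_insert.mp (hsub hq1) with h1 | h1 <;>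
        rcases Finset.mem_insert.mp (hsub hq2) with h2 | h2
      · exact absurd (h1.trans h2.symm) hne
      · have := (hP q2 h2).2.1; subst h1; omega
      · have := (hP q1 h1).2.1; subst h2; omega
      · have hy1 := (hP q1 h1).2.1
        have hy2 := (hP q2 h2).2.1
        calc 2*y ≤ y*y := by nlinarith
        _ ≤ q1 * q2 := Nat.mul_le_mul hy1 hy2
    omega

lemma key_neg (hy : 3 ≤ y) (hP : Pgood y P) (hodd : Odd P.card)
    (hm : m < 2*y) (hm1 : 1 ≤ m) :
    (X:ℤ[X])^(m+1) ∣ cyclotomic (∏ p ∈ P, p) ℤ * (1 - X)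
      - (1 - ∑ p ∈ P.filter (· ≤ m), X^p) := by
  classical
  set N := ∏ p ∈ P, p with hNdef
  have hp : ∀ p ∈ P, p.Prime := fun p h => (hP p h).1
  have hsq : Squarefree N := sqf_prod hp
  have hN0 : N ≠ 0 := prod_ne_zero hp
  have hPne : P.Nonempty := Finset.card_pos.mp hodd.pos
  have hN1 : 1 < N := by
    obtain ⟨p, hpm⟩ := hPne
    have h3 : y ≤ p := (hP p hpm).2.1
    have hdvdp : p ∣ N := Finset.dvd_prod_of_mem _ hpm
    have := Nat.le_of_dvd (Nat.pos_of_ne_zero hN0) hdvdp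
    omega
  have hμN : μ N = -1 := by
    rw [hNdef, moebius_prod hp, hodd.neg_one_pow]
  have hNerase : ∀ p ∈ P, (∏ q ∈ P.erase p, q) * p = N :=
    fun p hp' => Finset.prod_erase_mul P _ hp'
  have hμerase : ∀ p ∈ P, μ (∏ q ∈ P.erase p, q) = 1 := by
    intro p hp'
    rw [moebius_prod (fun q hq => hp q (Finset.mem_of_mem_erase hq)),
      Finset.card_erase_of_mem hp']
    have he : Even (P.card - 1) := by
      obtain ⟨t, ht⟩ := hodd; exact ⟨t, by omega⟩
    exact he.neg_one_pow
  have h2P : (2:ℕ) ∉ P := fun h2 => by have := (hP 2 h2).2.1; omega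
  have h2N : ¬ (2 ∣ N) := by
    intro h2
    exact h2P ((Nat.primeFactors_prod hp) ▸ Nat.mem_primeFactors.mpr ⟨Nat.prime_two, h2, hN0⟩)
  -- the Möbius polynomial identity
  have hmob := moebius_poly N hsq
  -- quotient setup
  set I : Ideal ℤ[X] := Ideal.span {(X:ℤ[X])^(m+1)} with hI
  set φ : ℤ[X] →+* (ℤ[X] ⧸ I) := Ideal.Quotient.mk I with hφdef
  have hφ : ∀ a b : ℤ[X], φ a = φ b ↔ (X:ℤ[X])^(m+1) ∣ a - b := by
    intro a b
    rw [hφdef, Ideal.Quotient.eq, hI, Ideal.mem_span_singleton]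
  -- small divisors classification specialised
  have hsmall : ∀ i : ℕ × ℕ, i ∈ N.divisorsAntidiagonal → i.2 ≤ m →
      (i = (N, 1)) ∨ (i.2 ∈ P ∧ i.1 = ∏ q ∈ P.erase i.2, q) := by
    intro i hi hile
    obtain ⟨hmul, -⟩ := Nat.mem_divisorsAntidiagonal.mp hi
    have hdvd : i.2 ∣ N := ⟨i.1, hmul.symm.trans (mul_comm _ _)⟩
    rcases small_dvd_two hy hP hm (hdvd.trans ⟨2, by ring⟩) hile with h1 | h2 | hPmem
    · left
      have : i.1 = N := by rw [← hmul, h1, mul_one]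
      exact Prod.ext this h1
    · exact absurd (h2 ▸ hdvd) h2N
    · right
      refine ⟨hPmem, ?_⟩
      have hpos : 0 < i.2 := (hp _ hPmem).pos
      exact Nat.eq_of_mul_eq_mul_right hpos (hmul.trans (hNerase _ hPmem).symm)
  set P' : Finset ℕ := P.filter (· ≤ m) with hP'
  set S₁ : Finset (ℕ × ℕ) := N.divisorsAntidiagonal.filter (fun i => μ i.1 = 1) with hS₁
  set S₂ : Finset (ℕ × ℕ) := N.divisorsAntidiagonal.filter (fun i => μ i.1 = -1) with hS₂
  have hS₂s : S₂.filter (fun i => i.2 ≤ m) = {(N, 1)} := by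
    ext i
    simp only [hS₂, Finset.mem_filter, Finset.mem_singleton, Nat.mem_divisorsAntidiagonal]
    constructor
    · rintro ⟨⟨hi, hμi⟩, hile⟩
      rcases hsmall i (Nat.mem_divisorsAntidiagonal.mpr hi) hile with h | ⟨hmem, h1⟩
      · exact h
      · exfalso
        rw [h1, hμerase _ hmem] at hμi
        norm_num at hμi
    · rintro rfl
      exact ⟨⟨⟨mul_one N, hN0⟩, hμN⟩, hm1⟩
  have hS₁s : S₁.filter (fun i => i.2 ≤ m)
      = P'.image (fun p => ((∏ q ∈ P.erase p, q), p)) := by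
    ext i
    simp only [hS₁, hP', Finset.mem_filter, Finset.mem_image, Nat.mem_divisorsAntidiagonal]
    constructor
    · rintro ⟨⟨hi, hμi⟩, hile⟩
      rcases hsmall i (Nat.mem_divisorsAntidiagonal.mpr hi) hile with h | ⟨hmem, h1⟩
      · exfalso
        rw [h, hμN] at hμi
        norm_num at hμi
      · exact ⟨i.2, ⟨hmem, hile⟩, by rw [← h1]⟩
    · rintro ⟨p, ⟨hmem, hle⟩, rfl⟩
      exact ⟨⟨⟨hNerase p hmem, hN0⟩, hμerase p hmem⟩, hle⟩
  -- products over big parts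
  have hbig : ∀ (S : Finset (ℕ × ℕ)), (∀ i ∈ S, i.1 * i.2 = N) →
      φ (∏ i ∈ S.filter (fun i => ¬ i.2 ≤ m), ((X:ℤ[X])^i.2 - 1))
        = φ ((-1) ^ (S.filter (fun i => ¬ i.2 ≤ m)).card) := by
    intro S hS
    rw [map_prod, map_pow]
    rw [← Finset.prod_const]
    apply Finset.prod_congr rfl
    intro i hi
    obtain ⟨hiS, hile⟩ := Finset.mem_filter.mp hi
    refine (hφ _ _).mpr ?_
    have h' : (X:ℤ[X])^i.2 - 1 - (-1) = X^i.2 := by ring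
    rw [h']
    exact pow_dvd_pow _ (by omega)
  -- assemble
  have hsum : ∀ p ∈ P', ∀ q ∈ P', m < p + q := by
    intro p hp' q hq'
    have h1 := (hP p (Finset.mem_filter.mp hp').1).2.1
    have h2 := (hP q (Finset.mem_filter.mp hq').1).2.1
    omega
  set Sg : ℤ[X] := ∑ p ∈ P', (X:ℤ[X])^p with hSg
  set r := P'.card with hr
  set e₁ := (S₁.filter (fun i => ¬ i.2 ≤ m)).card with he₁
  set e₂ := (S₂.filter (fun i => ¬ i.2 ≤ m)).card with he₂
  have hS₂mem : ∀ i ∈ S₂, i.1 * i.2 = N :=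
    fun i hi => (Nat.mem_divisorsAntidiagonal.mp (Finset.mem_filter.mp hi).1).1
  have hS₁mem : ∀ i ∈ S₁, i.1 * i.2 = N :=
    fun i hi => (Nat.mem_divisorsAntidiagonal.mp (Finset.mem_filter.mp hi).1).1
  have h2 : φ (∏ i ∈ S₂, ((X:ℤ[X])^i.2 - 1)) = φ ((X - 1) * (-1)^e₂) := by
    rw [← Finset.prod_filter_mul_prod_filter_not S₂ (fun i => i.2 ≤ m), map_mul,
      hbig S₂ hS₂mem, hS₂s, Finset.prod_singleton, map_mul, pow_one]
  have h1 : φ (∏ i ∈ S₁, ((X:ℤ[X])^i.2 - 1)) = φ ((1 - Sg) * ((-1)^(e₁ + r))) := by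
    rw [← Finset.prod_filter_mul_prod_filter_not S₁ (fun i => i.2 ≤ m), map_mul,
      hbig S₁ hS₁mem, hS₁s]
    rw [Finset.prod_image (by intro a _ b _ hab; exact (Prod.mk.injEq _ _ _ _).mp hab |>.2)]
    have hconv : ∏ p ∈ P', ((X:ℤ[X])^p - 1) = (-1)^r * ∏ p ∈ P', (1 - X^p) := by
      rw [hr, ← Finset.prod_const, ← Finset.prod_mul_distrib]
      exact Finset.prod_congr rfl (fun p _ => by ring)
    have hps : φ (∏ p ∈ P', (1 - (X:ℤ[X])^p)) = φ (1 - Sg) :=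
      (hφ _ _).mpr (prod_one_sub_X_pow P' hsum)
    rw [hconv, map_mul, hps, ← map_mul, ← map_mul]
    congr 1
    rw [← he₁, pow_add]
    ring
  -- combine to a single divisibility
  obtain ⟨t2, ht2⟩ := (hφ _ _).mp h2
  obtain ⟨t1, ht1⟩ := (hφ _ _).mp h1
  have dkey : (X:ℤ[X])^(m+1) ∣ cyclotomic N ℤ * (X - 1) * (-1)^e₂
      - (1 - Sg) * (-1)^(e₁ + r) := by
    refine ⟨t1 - cyclotomic N ℤ * t2, ?_⟩
    linear_combination ht1 - cyclotomic N ℤ * ht2 + hmob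
  have dkey2 : (X:ℤ[X])^(m+1) ∣ cyclotomic N ℤ * (X - 1)
      - (1 - Sg) * (-1)^(e₁ + r + e₂) := by
    have := Dvd.dvd.mul_right dkey ((-1:ℤ[X])^e₂)
    have heq : (cyclotomic N ℤ * (X - 1) * (-1)^e₂ - (1 - Sg) * (-1)^(e₁ + r)) * (-1)^e₂
        = cyclotomic N ℤ * (X - 1) * ((-1:ℤ[X])^2)^e₂
          - (1 - Sg) * (-1)^(e₁ + r + e₂) := by
      rw [pow_add, ← pow_mul, mul_comm 2 e₂, pow_mul]
      ring
    rw [heq] at this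
    simpa using this
  -- pin down the sign via the constant coefficient
  have hw : ((-1:ℤ[X])^(e₁ + r + e₂)) = C ((-1:ℤ)^(e₁ + r + e₂)) := by
    rw [map_pow, map_neg, map_one]
  have h0P' : (0:ℕ) ∉ P' := by
    intro h
    exact (hp 0 (Finset.mem_filter.mp h).1).ne_zero rfl
  have hc0 : (cyclotomic N ℤ * (X - 1)).coeff 0
      = ((1 - Sg) * (-1)^(e₁ + r + e₂)).coeff 0 := coeff_eq_of_dvd dkey2 (Nat.zero_le m)
  have hcL : (cyclotomic N ℤ * (X - 1)).coeff 0 = -1 := by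
    rw [mul_coeff_zero, cyclotomic_coeff_zero ℤ hN1]
    simp
  have hcR : ((1 - Sg) * (-1)^(e₁ + r + e₂)).coeff 0 = (-1:ℤ)^(e₁ + r + e₂) := by
    rw [hw, mul_coeff_zero, coeff_C]
    have : (1 - Sg).coeff 0 = 1 := by
      rw [coeff_sub, hSg, sum_X_pow_coeff, coeff_one_zero, if_neg h0P']
      ring
    rw [this]
    simp
  have hsgn : ((-1:ℤ)^(e₁ + r + e₂)) = -1 := by
    rw [← hcR, ← hc0, hcL]
  have dfinal : (X:ℤ[X])^(m+1) ∣ cyclotomic N ℤ * (X - 1) + (1 - Sg) := by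
    have := dkey2
    rw [hw, hsgn] at this
    have he : cyclotomic N ℤ * (X - 1) - (1 - Sg) * C (-1)
        = cyclotomic N ℤ * (X - 1) + (1 - Sg) := by
      rw [map_neg, map_one]; ring
    rwa [he] at this
  have hgoal : cyclotomic N ℤ * (1 - X) - (1 - Sg)
      = -(cyclotomic N ℤ * (X - 1) + (1 - Sg)) := by ring
  rw [hgoal]
  exact dvd_neg.mpr dfinal

lemma key_pos (hy : 3 ≤ y) (hP : Pgood y P) (hodd : Odd P.card)
    (hm : m < 2*y) (hm2 : 2 ≤ m) :
    (X:ℤ[X])^(m+1) ∣ cyclotomic (2 * ∏ p ∈ P, p) ℤ * (1 + X)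
      - (1 + ∑ p ∈ P.filter (· ≤ m), X^p) := by
  classical
  set N := ∏ p ∈ P, p with hNdef
  have hp : ∀ p ∈ P, p.Prime := fun p h => (hP p h).1
  have hN0 : N ≠ 0 := prod_ne_zero hp
  have hPne : P.Nonempty := Finset.card_pos.mp hodd.pos
  have h2P : (2:ℕ) ∉ P := fun h2 => by have := (hP 2 h2).2.1; omega
  have hprime2 : ∀ p ∈ insert 2 P, p.Prime := by
    intro p hp'
    rcases Finset.mem_insert.mp hp' with h | h
    · rw [h]; exact Nat.prime_two
    · exact hp p h
  have hsq2 : Squarefree (2 * N) := by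
    have := sqf_prod hprime2
    rwa [Finset.prod_insert h2P] at this
  have hM0 : 2 * N ≠ 0 := Nat.mul_ne_zero two_ne_zero hN0
  have hM1 : 1 < 2 * N := by
    have : 1 ≤ N := Nat.pos_of_ne_zero hN0
    omega
  have h2N : ¬ (2 ∣ N) := by
    intro h2
    exact h2P ((Nat.primeFactors_prod hp) ▸ Nat.mem_primeFactors.mpr ⟨Nat.prime_two, h2, hN0⟩)
  have hcop2 : Nat.Coprime 2 N := (Nat.Prime.coprime_iff_not_dvd Nat.prime_two).mpr h2N
  have hμN : μ N = -1 := by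
    rw [hNdef, moebius_prod hp, hodd.neg_one_pow]
  have hμM : μ (2 * N) = 1 := by
    rw [isMultiplicative_moebius.map_mul_of_coprime hcop2,
      moebius_apply_prime Nat.prime_two, hμN]
    ring
  have hNerase : ∀ p ∈ P, (2 * ∏ q ∈ P.erase p, q) * p = 2 * N := by
    intro p hp'
    rw [mul_assoc, Finset.prod_erase_mul P _ hp']
  have hμerase : ∀ p ∈ P, μ (2 * ∏ q ∈ P.erase p, q) = -1 := by
    intro p hp'
    have hpe : ∀ q ∈ P.erase p, q.Prime := fun q hq => hp q (Finset.mem_of_mem_erase hq)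
    have h2e : ¬ (2 ∣ ∏ q ∈ P.erase p, q) := by
      intro h2
      have h2m : (2:ℕ) ∈ P.erase p := (Nat.primeFactors_prod hpe) ▸
        Nat.mem_primeFactors.mpr ⟨Nat.prime_two, h2, prod_ne_zero hpe⟩
      exact h2P (Finset.mem_of_mem_erase h2m)
    rw [isMultiplicative_moebius.map_mul_of_coprime
      ((Nat.Prime.coprime_iff_not_dvd Nat.prime_two).mpr h2e),
      moebius_apply_prime Nat.prime_two,
      moebius_prod hpe, Finset.card_erase_of_mem hp']
    have he : Even (P.card - 1) := by
      obtain ⟨t, ht⟩ := hodd; exact ⟨t, by omega⟩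
    rw [he.neg_one_pow]
    ring
  -- Möbius identity for 2N
  have hmob := moebius_poly (2 * N) hsq2
  set I : Ideal ℤ[X] := Ideal.span {(X:ℤ[X])^(m+1)} with hI
  set φ : ℤ[X] →+* (ℤ[X] ⧸ I) := Ideal.Quotient.mk I with hφdef
  have hφ : ∀ a b : ℤ[X], φ a = φ b ↔ (X:ℤ[X])^(m+1) ∣ a - b := by
    intro a b
    rw [hφdef, Ideal.Quotient.eq, hI, Ideal.mem_span_singleton]
  have hsmall : ∀ i : ℕ × ℕ, i ∈ (2*N).divisorsAntidiagonal → i.2 ≤ m →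
      (i = (2*N, 1)) ∨ (i = (N, 2)) ∨ (i.2 ∈ P ∧ i.1 = 2 * ∏ q ∈ P.erase i.2, q) := by
    intro i hi hile
    obtain ⟨hmul, -⟩ := Nat.mem_divisorsAntidiagonal.mp hi
    have hdvd : i.2 ∣ 2*N := ⟨i.1, hmul.symm.trans (mul_comm _ _)⟩
    rcases small_dvd_two hy hP hm hdvd hile with h1 | h2 | hPmem
    · left
      have : i.1 = 2*N := by rw [← hmul, h1, mul_one]
      exact Prod.ext this h1
    · right; left
      have h12 : i.1 * 2 = N * 2 := by
        rw [h2] at hmul; omega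
      exact Prod.ext (Nat.eq_of_mul_eq_mul_right (by norm_num) h12) h2
    · right; right
      refine ⟨hPmem, ?_⟩
      have hpos : 0 < i.2 := (hp _ hPmem).pos
      exact Nat.eq_of_mul_eq_mul_right hpos (hmul.trans (hNerase _ hPmem).symm)
  set P' : Finset ℕ := P.filter (· ≤ m) with hP'
  have hp3 : ∀ p ∈ P', 3 ≤ p := by
    intro p hp'
    have := (hP p (Finset.mem_filter.mp hp').1).2.1
    omega
  set S₁ : Finset (ℕ × ℕ) := (2*N).divisorsAntidiagonal.filter (fun i => μ i.1 = 1) with hS₁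
  set S₂ : Finset (ℕ × ℕ) := (2*N).divisorsAntidiagonal.filter (fun i => μ i.1 = -1) with hS₂
  have hS₁s : S₁.filter (fun i => i.2 ≤ m) = {(2*N, 1)} := by
    ext i
    simp only [hS₁, Finset.mem_filter, Finset.mem_singleton, Nat.mem_divisorsAntidiagonal]
    constructor
    · rintro ⟨⟨hi, hμi⟩, hile⟩
      rcases hsmall i (Nat.mem_divisorsAntidiagonal.mpr hi) hile with h | h | ⟨hmem, h1⟩
      · exact h
      · exfalso
        rw [h] at hμi
        simp only at hμi
        rw [hμN] at hμi
        norm_num at hμi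
      · exfalso
        rw [h1, hμerase _ hmem] at hμi
        norm_num at hμi
    · rintro rfl
      exact ⟨⟨⟨mul_one _, hM0⟩, hμM⟩, by omega⟩
  have hS₂s : S₂.filter (fun i => i.2 ≤ m)
      = insert (N, 2) (P'.image (fun p => ((2 * ∏ q ∈ P.erase p, q), p))) := by
    ext i
    simp only [hS₂, hP', Finset.mem_filter, Finset.mem_insert, Finset.mem_image,
      Nat.mem_divisorsAntidiagonal]
    constructor
    · rintro ⟨⟨hi, hμi⟩, hile⟩
      rcases hsmall i (Nat.mem_divisorsAntidiagonal.mpr hi) hile with h | h | ⟨hmem, h1⟩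
      · exfalso
        rw [h] at hμi
        simp only at hμi
        rw [hμM] at hμi
        norm_num at hμi
      · exact Or.inl h
      · exact Or.inr ⟨i.2, ⟨hmem, hile⟩, by rw [← h1]⟩
    · rintro (rfl | ⟨p, ⟨hmem, hle⟩, rfl⟩)
      · refine ⟨⟨⟨by ring, hM0⟩, hμN⟩, hm2⟩
      · exact ⟨⟨⟨hNerase p hmem, hM0⟩, hμerase p hmem⟩, hle⟩
  have hbig : ∀ (S : Finset (ℕ × ℕ)),
      φ (∏ i ∈ S.filter (fun i => ¬ i.2 ≤ m), ((X:ℤ[X])^i.2 - 1))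
        = φ ((-1) ^ (S.filter (fun i => ¬ i.2 ≤ m)).card) := by
    intro S
    rw [map_prod, map_pow]
    rw [← Finset.prod_const]
    apply Finset.prod_congr rfl
    intro i hi
    obtain ⟨hiS, hile⟩ := Finset.mem_filter.mp hi
    refine (hφ _ _).mpr ?_
    have h' : (X:ℤ[X])^i.2 - 1 - (-1) = X^i.2 := by ring
    rw [h']
    exact pow_dvd_pow _ (by omega)
  have hsum : ∀ p ∈ P', ∀ q ∈ P', m < p + q := by
    intro p hp' q hq'
    have h1 := (hP p (Finset.mem_filter.mp hp').1).2.1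
    have h2 := (hP q (Finset.mem_filter.mp hq').1).2.1
    omega
  set Sg : ℤ[X] := ∑ p ∈ P', (X:ℤ[X])^p with hSg
  set r := P'.card with hr
  set e₁ := (S₁.filter (fun i => ¬ i.2 ≤ m)).card with he₁
  set e₂ := (S₂.filter (fun i => ¬ i.2 ≤ m)).card with he₂
  have h1 : φ (∏ i ∈ S₁, ((X:ℤ[X])^i.2 - 1)) = φ ((X - 1) * (-1)^e₁) := by
    rw [← Finset.prod_filter_mul_prod_filter_not S₁ (fun i => i.2 ≤ m), map_mul,
      hbig S₁, hS₁s, Finset.prod_singleton, map_mul, pow_one]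
  have h2 : φ (∏ i ∈ S₂, ((X:ℤ[X])^i.2 - 1)) = φ ((X^2 - 1) * ((1 - Sg) * (-1)^(r + e₂))) := by
    rw [← Finset.prod_filter_mul_prod_filter_not S₂ (fun i => i.2 ≤ m), map_mul,
      hbig S₂, hS₂s]
    have hnotmem : (N, 2) ∉ P'.image (fun p => ((2 * ∏ q ∈ P.erase p, q), p)) := by
      intro hmem
      obtain ⟨p, hp', hpe⟩ := Finset.mem_image.mp hmem
      have := hp3 p hp'
      have : p = 2 := ((Prod.mk.injEq _ _ _ _).mp hpe).2
      omega
    rw [Finset.prod_insert hnotmem]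
    rw [Finset.prod_image (by intro a _ b _ hab; exact (Prod.mk.injEq _ _ _ _).mp hab |>.2)]
    have hconv : ∏ p ∈ P', ((X:ℤ[X])^p - 1) = (-1)^r * ∏ p ∈ P', (1 - X^p) := by
      rw [hr, ← Finset.prod_const, ← Finset.prod_mul_distrib]
      exact Finset.prod_congr rfl (fun p _ => by ring)
    have hps : φ (∏ p ∈ P', (1 - (X:ℤ[X])^p)) = φ (1 - Sg) :=
      (hφ _ _).mpr (prod_one_sub_X_pow P' hsum)
    simp only
    rw [hconv, map_mul, map_mul, hps, ← map_mul, ← map_mul, ← map_mul]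
    congr 1
    rw [← he₂, pow_add]
    ring
  -- combine
  obtain ⟨t1, ht1⟩ := (hφ _ _).mp h1
  obtain ⟨t2, ht2⟩ := (hφ _ _).mp h2
  obtain ⟨t3, ht3⟩ := sq_sum_X_pow P' hsum
  have dkey2 : (X:ℤ[X])^(m+1) ∣ cyclotomic (2*N) ℤ * (X^2 - 1) * (1 - Sg)
      - (X - 1) * (-1)^(e₁ + r + e₂) := by
    have dkey : (X:ℤ[X])^(m+1) ∣ cyclotomic (2*N) ℤ * (X^2 - 1) * ((1 - Sg) * (-1)^(r + e₂))
        - (X - 1) * (-1)^e₁ := by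
      refine ⟨t1 - cyclotomic (2*N) ℤ * t2, ?_⟩
      linear_combination ht1 - cyclotomic (2*N) ℤ * ht2 + hmob
    have hthis := Dvd.dvd.mul_right dkey ((-1:ℤ[X])^(r + e₂))
    have hsq1 : (((-1:ℤ[X])^(r + e₂)))^2 = 1 := by
      rw [← pow_mul]
      exact Even.neg_one_pow ⟨r + e₂, by ring⟩
    have heq : (cyclotomic (2*N) ℤ * (X^2 - 1) * ((1 - Sg) * (-1)^(r + e₂))
          - (X - 1) * (-1)^e₁) * (-1)^(r + e₂)
        = cyclotomic (2*N) ℤ * (X^2 - 1) * (1 - Sg) * (((-1:ℤ[X])^(r + e₂))^2)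
          - (X - 1) * ((-1)^e₁ * (-1)^(r + e₂)) := by
      ring
    rw [heq, hsq1, mul_one, ← pow_add, ← add_assoc] at hthis
    exact hthis
  have dkey3 : (X:ℤ[X])^(m+1) ∣ (X - 1) *
      (cyclotomic (2*N) ℤ * (X + 1) - (1 + Sg) * (-1)^(e₁ + r + e₂)) := by
    obtain ⟨t4, ht4⟩ := dkey2
    refine ⟨t4 * (1 + Sg) + cyclotomic (2*N) ℤ * (X^2 - 1) * t3, ?_⟩
    linear_combination (1 + Sg) * ht4 + cyclotomic (2*N) ℤ * (X^2 - 1) * ht3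
  have hcop : IsCoprime ((X:ℤ[X])^(m+1)) (X - 1) := by
    have hbase : IsCoprime (X:ℤ[X]) (X - 1) := ⟨1, -1, by ring⟩
    exact hbase.pow_left
  have dkey4 : (X:ℤ[X])^(m+1) ∣
      cyclotomic (2*N) ℤ * (X + 1) - (1 + Sg) * (-1)^(e₁ + r + e₂) :=
    hcop.dvd_of_dvd_mul_left dkey3
  -- pin the sign
  have hw : ((-1:ℤ[X])^(e₁ + r + e₂)) = C ((-1:ℤ)^(e₁ + r + e₂)) := by
    rw [map_pow, map_neg, map_one]
  have h0P' : (0:ℕ) ∉ P' := fun h => by have := hp3 0 h; omega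
  have hc0 := coeff_eq_of_dvd dkey4 (Nat.zero_le m)
  have hcL : (cyclotomic (2*N) ℤ * (X + 1)).coeff 0 = 1 := by
    rw [mul_coeff_zero, cyclotomic_coeff_zero ℤ hM1]
    simp
  have hcR : ((1 + Sg) * (-1)^(e₁ + r + e₂)).coeff 0 = (-1:ℤ)^(e₁ + r + e₂) := by
    rw [hw, mul_coeff_zero, coeff_C]
    have hone : (1 + Sg).coeff 0 = 1 := by
      rw [coeff_add, hSg, sum_X_pow_coeff, coeff_one_zero, if_neg h0P']
      ring
    rw [hone]
    simp
  have hsgn : ((-1:ℤ)^(e₁ + r + e₂)) = 1 := by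
    rw [← hcR, ← hc0, hcL]
  have dfinal : (X:ℤ[X])^(m+1) ∣ cyclotomic (2*N) ℤ * (1 + X) - (1 + Sg) := by
    have := dkey4
    rw [hw, hsgn] at this
    have he : cyclotomic (2*N) ℤ * (X + 1) - (1 + Sg) * C 1
        = cyclotomic (2*N) ℤ * (1 + X) - (1 + Sg) := by
      rw [map_one]; ring
    rwa [he] at this
  exact dfinal

lemma card_filter_succ (P : Finset ℕ) (k : ℕ) :
    (P.filter (· ≤ k+1)).card = (P.filter (· ≤ k)).card + (if k+1 ∈ P then 1 else 0) := by
  classical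
  have hsplit : P.filter (· ≤ k+1) = (P.filter (· ≤ k)) ∪ P.filter (fun x => x = k+1) := by
    ext x
    simp only [Finset.mem_filter, Finset.mem_union]
    constructor
    · rintro ⟨hx, hle⟩
      rcases Nat.lt_or_ge x (k+1) with h | h
      · exact Or.inl ⟨hx, by omega⟩
      · exact Or.inr ⟨hx, by omega⟩
    · rintro (⟨hx, h⟩ | ⟨hx, h⟩) <;> exact ⟨hx, by omega⟩
  have hdisj : Disjoint (P.filter (· ≤ k)) (P.filter (fun x => x = k+1)) := by
    rw [Finset.disjoint_left]
    intro x hx1 hx2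
    have h1 := (Finset.mem_filter.mp hx1).2
    have h2 := (Finset.mem_filter.mp hx2).2
    omega
  rw [hsplit, Finset.card_union_of_disjoint hdisj, Finset.filter_eq']
  split <;> simp

lemma coeff_rec {m : ℕ} (Φ : ℤ[X]) (ε : ℤ) (P' : Finset ℕ)
    (hpos : ∀ p ∈ P', 0 < p) (hp' : ∀ p ∈ P', ε^p = ε)
    (D : (X:ℤ[X])^(m+1) ∣ Φ * (1 - C ε * X) - (1 - C ε * ∑ p ∈ P', X^p)) :
    ∀ k ≤ m, Φ.coeff k = ε^k * (1 - ((P'.filter (· ≤ k)).card : ℤ)) := by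
  intro k
  induction k with
  | zero =>
    intro _
    have h := coeff_eq_of_dvd D (Nat.zero_le m)
    have hL : (Φ * (1 - C ε * X)).coeff 0 = Φ.coeff 0 := by
      rw [mul_coeff_zero, coeff_sub, coeff_one_zero, coeff_C_mul, coeff_X_zero]
      ring
    have hR : ((1:ℤ[X]) - C ε * ∑ p ∈ P', X^p).coeff 0 = 1 := by
      rw [coeff_sub, coeff_one_zero, coeff_C_mul, sum_X_pow_coeff,
        if_neg (fun h0 => by have := hpos 0 h0; omega)]
      ring
    have hf : P'.filter (· ≤ 0) = ∅ := by
      rw [Finset.filter_eq_empty_iff]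
      intro p hp
      have := hpos p hp
      omega
    rw [hL, hR] at h
    rw [h, hf]
    simp
  | succ k ih =>
    intro hk1
    have ihk := ih (by omega)
    have h := coeff_eq_of_dvd D hk1
    have hL : (Φ * (1 - C ε * X)).coeff (k+1) = Φ.coeff (k+1) - ε * Φ.coeff k := by
      have hee : Φ * (1 - C ε * X) = Φ - C ε * (Φ * X) := by ring
      rw [hee, coeff_sub, coeff_C_mul, coeff_mul_X]
    have hR : ((1:ℤ[X]) - C ε * ∑ p ∈ P', X^p).coeff (k+1)
        = - ε * (if k+1 ∈ P' then 1 else 0) := by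
      rw [coeff_sub, coeff_C_mul, sum_X_pow_coeff, coeff_one]
      rw [if_neg (by omega)]
      ring
    rw [hL, hR] at h
    have hcard := card_filter_succ P' k
    by_cases hmem : k+1 ∈ P'
    · have hpow : ε^(k+1) = ε := hp' _ hmem
      rw [if_pos hmem] at h
      rw [if_pos hmem] at hcard
      have : Φ.coeff (k+1) = ε * Φ.coeff k - ε := by linarith
      rw [this, ihk, hcard]
      push_cast
      linear_combination hpow + (((P'.filter (· ≤ k)).card : ℤ) - 1) * pow_succ ε k
    · rw [if_neg hmem] at h
      rw [if_neg hmem] at hcard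
      have : Φ.coeff (k+1) = ε * Φ.coeff k := by linarith
      rw [this, ihk, hcard, pow_succ]
      push_cast
      ring

lemma clusters (s : ℕ) : ∃ y : ℕ, 3 ≤ y ∧ s ≤ ((Finset.Ico y (2*y)).filter Nat.Prime).card := by
  by_contra hcon
  push_neg at hcon
  set f : ℕ → ℝ := {p | Nat.Prime p}.indicator (fun n => 1 / (n:ℝ)) with hf
  have hnonneg : ∀ n, 0 ≤ f n := by
    intro n
    apply Set.indicator_nonneg
    intro x _
    positivity
  have hblock : ∀ K : ℕ, 2 ≤ K →
      ∑ i ∈ Finset.Ico (2^K) (2^(K+1)), f i ≤ (s:ℝ) * (1/2:ℝ)^K := by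
    intro K hK
    have hIco : Finset.Ico (2^K) (2^(K+1)) = Finset.Ico (2^K) (2 * 2^K) := by
      rw [pow_succ, mul_comm]
    have hfilter : ∑ i ∈ Finset.Ico (2^K) (2^(K+1)), f i
        = ∑ i ∈ (Finset.Ico (2^K) (2^(K+1))).filter Nat.Prime, f i := by
      symm
      apply Finset.sum_filter_of_ne
      intro x _ hne
      by_contra hnp
      exact hne (Set.indicator_of_notMem hnp _)
    have hcard : ((Finset.Ico (2^K) (2^(K+1))).filter Nat.Prime).card ≤ s := by
      have h3 : 3 ≤ 2^K := by
        calc 3 ≤ 2^2 := by norm_num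
        _ ≤ 2^K := Nat.pow_le_pow_right (by norm_num) hK
      have := hcon (2^K) h3
      rw [← hIco] at this
      omega
    have hterm : ∀ i ∈ (Finset.Ico (2^K) (2^(K+1))).filter Nat.Prime,
        f i ≤ (1/2:ℝ)^K := by
      intro i hi
      obtain ⟨hiI, hip⟩ := Finset.mem_filter.mp hi
      have hlb : 2^K ≤ i := (Finset.mem_Ico.mp hiI).1
      have hfi : f i = 1 / (i:ℝ) := Set.indicator_of_mem hip _
      rw [hfi, div_pow, one_pow]
      apply one_div_le_one_div_of_le (by positivity)
      exact_mod_cast hlb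
    rw [hfilter]
    calc ∑ i ∈ (Finset.Ico (2^K) (2^(K+1))).filter Nat.Prime, f i
        ≤ ((Finset.Ico (2^K) (2^(K+1))).filter Nat.Prime).card • ((1/2:ℝ)^K) :=
          Finset.sum_le_card_nsmul _ _ _ hterm
      _ = (((Finset.Ico (2^K) (2^(K+1))).filter Nat.Prime).card : ℝ) * (1/2:ℝ)^K :=
          nsmul_eq_mul _ _
      _ ≤ (s:ℝ) * (1/2:ℝ)^K := by
          apply mul_le_mul_of_nonneg_right _ (by positivity)
          exact_mod_cast hcard
  set B : ℝ := ∑ i ∈ Finset.range 8, f i with hB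
  have hpartial : ∀ K : ℕ, ∑ i ∈ Finset.range (2^(K+3)), f i
      ≤ B + (s:ℝ) * (1 - (1/2:ℝ)^K) := by
    intro K
    induction K with
    | zero =>
      simp only [pow_zero, pow_succ, pow_zero]
      norm_num
      exact le_of_eq hB.symm
    | succ K ih =>
      have hsplit : ∑ i ∈ Finset.range (2^(K+4)), f i
          = ∑ i ∈ Finset.range (2^(K+3)), f i + ∑ i ∈ Finset.Ico (2^(K+3)) (2^(K+4)), f i := by
        rw [Finset.range_eq_Ico, Finset.range_eq_Ico]
        exact (Finset.sum_Ico_consecutive f (Nat.zero_le _)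
          (Nat.pow_le_pow_right (show 0 < 2 by norm_num) (show K+3 ≤ K+4 by omega))).symm
      rw [show K + 1 + 3 = K + 4 from rfl, hsplit]
      have hb := hblock (K+3) (by omega)
      have hgeo : (s:ℝ) * (1 - (1/2:ℝ)^K) + (s:ℝ) * (1/2:ℝ)^(K+3)
          ≤ (s:ℝ) * (1 - (1/2:ℝ)^(K+1)) := by
        have ht : (0:ℝ) ≤ (1/2:ℝ)^K := by positivity
        have hs : (0:ℝ) ≤ (s:ℝ) := Nat.cast_nonneg s
        have hx : (1/2:ℝ)^(K+3) = (1/2:ℝ)^K * (1/8) := by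
          rw [pow_add]; norm_num
        have hy : (1/2:ℝ)^(K+1) = (1/2:ℝ)^K * (1/2) := by
          rw [pow_add]; norm_num
        rw [hx, hy]
        nlinarith
      linarith [ih, hb]
  have hbound : ∀ n : ℕ, ∑ i ∈ Finset.range n, f i ≤ B + (s:ℝ) := by
    intro n
    have hsub : Finset.range n ⊆ Finset.range (2^(n+3)) := by
      apply Finset.range_subset_range.mpr
      calc n ≤ 2^n := (Nat.lt_two_pow_self (n := n)).le
        _ ≤ 2^(n+3) := Nat.pow_le_pow_right (by norm_num) (by omega)
    have h1 : ∑ i ∈ Finset.range n, f i ≤ ∑ i ∈ Finset.range (2^(n+3)), f i :=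
      Finset.sum_le_sum_of_subset_of_nonneg hsub (fun i _ _ => hnonneg i)
    have h2 := hpartial n
    have h3 : (s:ℝ) * (1 - (1/2:ℝ)^n) ≤ (s:ℝ) := by
      have ht : (0:ℝ) ≤ (1/2:ℝ)^n := by positivity
      have hs : (0:ℝ) ≤ (s:ℝ) := Nat.cast_nonneg s
      nlinarith
    linarith
  exact not_summable_one_div_on_primes (summable_of_sum_range_le hnonneg hbound)

lemma rank_filter {P : Finset ℕ} {s : ℕ} (h : P.card = s) (i : Fin s) :
    (P.filter (· ≤ P.orderEmbOfFin h i)).card = (i:ℕ) + 1 := by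
  classical
  set f := P.orderEmbOfFin h with hfdef
  have himg : P.filter (· ≤ f i) = (Finset.Iic i).image (fun j => f j) := by
    ext p
    simp only [Finset.mem_filter, Finset.mem_image, Finset.mem_Iic]
    constructor
    · rintro ⟨hp, hle⟩
      have hrange : p ∈ Set.range f := by
        rw [hfdef, Finset.range_orderEmbOfFin]
        exact Finset.mem_coe.mpr hp
      obtain ⟨j, rfl⟩ := hrange
      exact ⟨j, f.le_iff_le.mp hle, rfl⟩
    · rintro ⟨j, hji, rfl⟩
      exact ⟨Finset.orderEmbOfFin_mem P h j, f.le_iff_le.mpr hji⟩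
  rw [himg, Finset.card_image_of_injective _ f.injective, Fin.card_Iic]

lemma main_thm (c : ℤ) : ∃ n m : ℕ, (Polynomial.cyclotomic n ℤ).coeff m = c := by
  classical
  rcases le_or_gt c 0 with hc | hc
  · -- negative or zero : coefficient 1 - r in Φ_N
    set r : ℕ := (1 - c).toNat with hrdef
    have hrc : (r:ℤ) = 1 - c := Int.toNat_of_nonneg (by omega)
    have hr1 : 1 ≤ r := by
      have : (1:ℤ) ≤ (r:ℤ) := by omega
      exact_mod_cast this
    set s := 2*r + 1 with hsdef
    obtain ⟨y, hy3, hcl⟩ := clusters s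
    obtain ⟨P, hPsub, hPcard⟩ := Finset.exists_subset_card_eq hcl
    have hPgood : Pgood y P := by
      intro p hp
      have := hPsub hp
      rw [Finset.mem_filter, Finset.mem_Ico] at this
      exact ⟨this.2, this.1.1, this.1.2⟩
    have hodd : Odd P.card := by rw [hPcard]; exact ⟨r, by omega⟩
    set i : Fin s := ⟨r - 1, by omega⟩ with hidef
    set m : ℕ := P.orderEmbOfFin hPcard i with hmdef
    have hmP : m ∈ P := Finset.orderEmbOfFin_mem P hPcard i
    have hm2y : m < 2*y := (hPgood m hmP).2.2
    have hmy : y ≤ m := (hPgood m hmP).2.1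
    have hrank : (P.filter (· ≤ m)).card = r := by
      rw [hmdef, rank_filter hPcard i]
      simp only [hidef]
      omega
    refine ⟨∏ p ∈ P, p, m, ?_⟩
    have hkey := key_neg hy3 hPgood hodd hm2y (by omega)
    have hD : (X:ℤ[X])^(m+1) ∣ cyclotomic (∏ p ∈ P, p) ℤ * (1 - C (1:ℤ) * X)
        - (1 - C (1:ℤ) * ∑ p ∈ P.filter (· ≤ m), X^p) := by
      rw [map_one, one_mul, one_mul]
      exact hkey
    have hco := coeff_rec (cyclotomic (∏ p ∈ P, p) ℤ) 1 (P.filter (· ≤ m))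
      (fun p hp => ((hPgood p (Finset.mem_filter.mp hp).1).1).pos)
      (fun p _ => one_pow p) hD m le_rfl
    rw [hco, one_pow, one_mul]
    have hff : (P.filter (· ≤ m)).filter (· ≤ m) = P.filter (· ≤ m) := by
      rw [Finset.filter_filter]
      simp
    rw [hff, hrank]
    omega
  · -- positive : coefficient r - 1 in Φ_{2N}
    set r : ℕ := (c + 1).toNat with hrdef
    have hrc : (r:ℤ) = c + 1 := Int.toNat_of_nonneg (by omega)
    have hr1 : 1 ≤ r := by
      have : (1:ℤ) ≤ (r:ℤ) := by omega
      exact_mod_cast this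
    set s := 2*r + 1 with hsdef
    obtain ⟨y, hy3, hcl⟩ := clusters s
    obtain ⟨P, hPsub, hPcard⟩ := Finset.exists_subset_card_eq hcl
    have hPgood : Pgood y P := by
      intro p hp
      have := hPsub hp
      rw [Finset.mem_filter, Finset.mem_Ico] at this
      exact ⟨this.2, this.1.1, this.1.2⟩
    have hodd : Odd P.card := by rw [hPcard]; exact ⟨r, by omega⟩
    set i : Fin s := ⟨r - 1, by omega⟩ with hidef
    set m : ℕ := P.orderEmbOfFin hPcard i with hmdef
    have hmP : m ∈ P := Finset.orderEmbOfFin_mem P hPcard i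
    have hm2y : m < 2*y := (hPgood m hmP).2.2
    have hmy : y ≤ m := (hPgood m hmP).2.1
    have hmodd : Odd m := ((hPgood m hmP).1).odd_of_ne_two (by omega)
    have hrank : (P.filter (· ≤ m)).card = r := by
      rw [hmdef, rank_filter hPcard i]
      simp only [hidef]
      omega
    refine ⟨2 * ∏ p ∈ P, p, m, ?_⟩
    have hkey := key_pos hy3 hPgood hodd hm2y (by omega)
    have hD : (X:ℤ[X])^(m+1) ∣ cyclotomic (2 * ∏ p ∈ P, p) ℤ * (1 - C (-1:ℤ) * X)
        - (1 - C (-1:ℤ) * ∑ p ∈ P.filter (· ≤ m), X^p) := by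
      have he : ∀ q : ℤ[X], (1 - C (-1:ℤ) * q) = 1 + q := by
        intro q
        rw [map_neg, map_one]
        ring
      rw [he, he]
      exact hkey
    have hco := coeff_rec (cyclotomic (2 * ∏ p ∈ P, p) ℤ) (-1) (P.filter (· ≤ m))
      (fun p hp => ((hPgood p (Finset.mem_filter.mp hp).1).1).pos)
      (fun p hp => (((hPgood p (Finset.mem_filter.mp hp).1).1).odd_of_ne_two
        (by have := (hPgood p (Finset.mem_filter.mp hp).1).2.1; omega)).neg_one_pow)
      hD m le_rfl
    rw [hco, hmodd.neg_one_pow]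
    have hff : (P.filter (· ≤ m)).filter (· ≤ m) = P.filter (· ≤ m) := by
      rw [Finset.filter_filter]
      simp
    rw [hff, hrank]
    omega

end Suzuki

open Polynomial

theorem stmt6 (c : ℤ) : ∃ n m : ℕ, (Polynomial.cyclotomic n ℤ).coeff m = c :=
  Suzuki.main_thm c
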